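/- Let Γ = (V,A) be a finite connected digraph, let G ≤ Aut(Γ) be vertex-transitive, and suppose Γ is (G,s)-arc-transitive with s ≥ 3. Let N ⊴ M ⊴ G with N not normal in G, M transitive on V, and N having at least 3 orbits on V. Then the quotient Γ_N is a connected digraph, N lies in the kernel of the induced action of N_G(N) on V_N, and the induced action of N_G(N)/N on Γ_N is vertex-transitive and transitive on the (s−1)-arcs of Γ_N. -/

import Mathlib

/-!
Statement 0: normal quotients of (G,s)-arc-transitive digraphs (Proposition p:quot(a)).
-/

namespace ArcTransDigraph

variable {V : Type*}

/-- The arc set of a digraph is asymmetric (in particular loopless). -/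
def IsDigraph (A : V → V → Prop) : Prop := ∀ u v : V, A u v → ¬ A v u

/-- Connectivity of the underlying undirected graph. -/
def Connected (A : V → V → Prop) : Prop :=
  ∀ u v : V, Relation.ReflTransGen (fun a b => A a b ∨ A b a) u v

/-- `G` consists of automorphisms of the digraph `(V, A)`. -/
def PreservesArcs (A : V → V → Prop) (G : Subgroup (Equiv.Perm V)) : Prop :=
  ∀ g ∈ G, ∀ u v : V, A u v → A (g u) (g v)

/-- `G` is transitive on vertices. -/
def VertexTransitive (G : Subgroup (Equiv.Perm V)) : Prop :=
  ∀ u v : V, ∃ g ∈ G, g u = v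

/-- `p` is an `s`-arc of the digraph with arc set `A`. -/
def IsArcSeq (A : V → V → Prop) (s : ℕ) (p : Fin (s + 1) → V) : Prop :=
  ∀ i : Fin s, A (p i.castSucc) (p i.succ)

/-- `G` is transitive on the `s`-arcs of the digraph with arc set `A`. -/
def ArcTransitive (A : V → V → Prop) (G : Subgroup (Equiv.Perm V)) (s : ℕ) : Prop :=
  ∀ p q : Fin (s + 1) → V, IsArcSeq A s p → IsArcSeq A s q →
    ∃ g ∈ G, ∀ i : Fin (s + 1), g (p i) = q i

/-- `N` is a subgroup of `G` which is normal in `G`. -/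
def NormalIn (N G : Subgroup (Equiv.Perm V)) : Prop :=
  N ≤ G ∧ ∀ g ∈ G, ∀ x ∈ N, g * x * g⁻¹ ∈ N

/-- The `N`-orbit of a vertex, as a point of the orbit space `V_N`. -/
def orbMk (N : Subgroup (Equiv.Perm V)) (v : V) : Quotient (MulAction.orbitRel N V) :=
  Quotient.mk _ v

/-- The arc set of the quotient digraph `Γ_N`. -/
def quotArc (A : V → V → Prop) (N : Subgroup (Equiv.Perm V)) :
    Quotient (MulAction.orbitRel N V) → Quotient (MulAction.orbitRel N V) → Prop :=
  fun U U' => ∃ u u' : V, orbMk N u = U ∧ orbMk N u' = U' ∧ A u u'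

/-! ### Auxiliary material -/

/-- ℕ-indexed arc sequences of length `t`. -/
def ArcN (A : V → V → Prop) (p : ℕ → V) (t : ℕ) : Prop :=
  ∀ i, i < t → A (p i) (p (i + 1))

lemma arcN_mono {A : V → V → Prop} {p : ℕ → V} {t t' : ℕ} (h : ArcN A p t) (ht : t' ≤ t) :
    ArcN A p t' := fun i hi => h i (lt_of_lt_of_le hi ht)

lemma orbMk_eq_iff (N : Subgroup (Equiv.Perm V)) {u v : V} :
    orbMk N u = orbMk N v ↔ ∃ n ∈ N, n v = u := by
  constructor
  · intro h
    have h2 := Quotient.exact h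
    have h3 : u ∈ MulAction.orbit N v := MulAction.orbitRel_apply.mp h2
    obtain ⟨⟨n, hn⟩, hnv⟩ := MulAction.mem_orbit_iff.mp h3
    refine ⟨n, hn, ?_⟩
    simpa [Submonoid.mk_smul, Equiv.Perm.smul_def] using hnv
  · rintro ⟨n, hn, rfl⟩
    refine Quotient.sound (MulAction.orbitRel_apply.mpr (MulAction.mem_orbit_iff.mpr ⟨⟨n, hn⟩, ?_⟩))
    simp [Submonoid.mk_smul, Equiv.Perm.smul_def]

lemma orbMk_smul {N : Subgroup (Equiv.Perm V)} {x : Equiv.Perm V} (hx : x ∈ N) (v : V) :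
    orbMk N (x v) = orbMk N v :=
  (orbMk_eq_iff N).mpr ⟨x, hx, rfl⟩

lemma normalizer_map {N : Subgroup (Equiv.Perm V)} {g : Equiv.Perm V}
    (hg : g ∈ Subgroup.normalizer (N : Set (Equiv.Perm V))) {u v : V} (h : orbMk N u = orbMk N v) :
    orbMk N (g u) = orbMk N (g v) := by
  rw [orbMk_eq_iff] at h ⊢
  obtain ⟨n, hn, hnv⟩ := h
  refine ⟨g * n * g⁻¹, (Subgroup.mem_normalizer_iff.mp hg n).mp hn, ?_⟩
  show (g * (n * g⁻¹)) (g v) = g u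
  simp only [Equiv.Perm.mul_apply]
  rw [show g⁻¹ (g v) = v from Equiv.symm_apply_apply g v, hnv]

lemma mem_norm_of_M {N M : Subgroup (Equiv.Perm V)} (hNM : NormalIn N M)
    {m : Equiv.Perm V} (hm : m ∈ M) : m ∈ Subgroup.normalizer (N : Set (Equiv.Perm V)) := by
  rw [Subgroup.mem_normalizer_iff]
  intro n
  constructor
  · exact fun hn => hNM.2 m hm n hn
  · intro hn
    have h2 := hNM.2 m⁻¹ (inv_mem hm) _ hn
    have h3 : m⁻¹ * (m * n * m⁻¹) * m⁻¹⁻¹ = n := by group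
    rwa [h3] at h2

lemma exists_arc {A : V → V → Prop} (hconn : Connected A) {u v : V} (hne : u ≠ v) :
    ∃ a b : V, A a b := by
  rcases (Relation.ReflTransGen.cases_head (hconn u v)) with h | ⟨c, hc, _⟩
  · exact absurd h hne
  · rcases hc with h | h
    · exact ⟨u, c, h⟩
    · exact ⟨c, u, h⟩

lemma out_ext {A : V → V → Prop} {G : Subgroup (Equiv.Perm V)}
    (hAut : PreservesArcs A G) (hvt : VertexTransitive G)
    (harc : ∃ a b : V, A a b) (v : V) : ∃ x, A v x := by
  obtain ⟨a, b, hab⟩ := harc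
  obtain ⟨g, hg, hga⟩ := hvt a v
  exact ⟨g b, hga ▸ hAut g hg a b hab⟩

lemma extend_one {A : V → V → Prop} {p : ℕ → V} {t : ℕ}
    (hp : ArcN A p t) (hout : ∀ v : V, ∃ x, A v x) :
    ∃ p' : ℕ → V, ArcN A p' (t + 1) ∧ ∀ i ≤ t, p' i = p i := by
  obtain ⟨c, hc⟩ := hout (p t)
  refine ⟨fun i => if i ≤ t then p i else c, ?_, fun i hi => if_pos hi⟩
  intro i hi
  rcases Nat.lt_or_ge i t with h | h
  · simp only [if_pos (by omega : i ≤ t), if_pos (by omega : i + 1 ≤ t)]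
    exact hp i h
  · have hit : i = t := by omega
    subst hit
    simp only [if_pos (le_refl i), if_neg (by omega : ¬ i + 1 ≤ i)]
    exact hc

lemma extend_many {A : V → V → Prop} (hout : ∀ v : V, ∃ x, A v x) (k : ℕ) :
    ∀ {p : ℕ → V} {t : ℕ}, ArcN A p t →
      ∃ p' : ℕ → V, ArcN A p' (t + k) ∧ ∀ i ≤ t, p' i = p i := by
  induction k with
  | zero => exact fun hp => ⟨_, hp, fun _ _ => rfl⟩
  | succ k ih =>
    intro p t hp
    obtain ⟨p1, hp1, he1⟩ := ih hp
    obtain ⟨p2, hp2, he2⟩ := extend_one hp1 hout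
    exact ⟨p2, by rwa [show t + (k + 1) = t + k + 1 by omega],
      fun i hi => (he2 i (by omega)).trans (he1 i hi)⟩

lemma G_arc_trans {A : V → V → Prop} {G : Subgroup (Equiv.Perm V)} {s : ℕ}
    (hat : ArcTransitive A G s) (hout : ∀ v : V, ∃ x, A v x)
    {t : ℕ} (hts : t ≤ s) {p q : ℕ → V} (hp : ArcN A p t) (hq : ArcN A q t) :
    ∃ g ∈ G, ∀ i ≤ t, g (p i) = q i := by
  obtain ⟨p', hp', hep⟩ := extend_many hout (s - t) hp
  obtain ⟨q', hq', heq⟩ := extend_many hout (s - t) hq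
  rw [show t + (s - t) = s by omega] at hp' hq'
  have hP : IsArcSeq A s (fun i : Fin (s + 1) => p' i.val) := by
    intro i
    have := hp' i.val i.isLt
    simpa [Fin.coe_castSucc, Fin.val_succ] using this
  have hQ : IsArcSeq A s (fun i : Fin (s + 1) => q' i.val) := by
    intro i
    have := hq' i.val i.isLt
    simpa [Fin.coe_castSucc, Fin.val_succ] using this
  obtain ⟨g, hg, hgi⟩ := hat _ _ hP hQ
  refine ⟨g, hg, fun i hi => ?_⟩
  have := hgi ⟨i, by omega⟩
  simpa [hep i hi, heq i hi] using this

/-- Key lemma: a vertex-transitive normal subgroup `M` of an `s`-arc-transitive group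
is transitive on `t`-arcs for all `t ≤ s - 1`. -/
lemma M_arc_trans {A : V → V → Prop} {G M : Subgroup (Equiv.Perm V)} {s : ℕ}
    (hAut : PreservesArcs A G) (hat : ArcTransitive A G s)
    (hMG : NormalIn M G) (hMtrans : ∀ u v : V, ∃ m ∈ M, m u = v)
    (hout : ∀ v : V, ∃ x, A v x) :
    ∀ t, t + 1 ≤ s → ∀ p q : ℕ → V, ArcN A p t → ArcN A q t →
      ∃ m ∈ M, ∀ i ≤ t, m (p i) = q i := by
  intro t
  induction t with
  | zero =>
    intro _ p q _ _
    obtain ⟨m, hm, hmu⟩ := hMtrans (p 0) (q 0)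
    exact ⟨m, hm, fun i hi => by rw [Nat.le_zero.mp hi]; exact hmu⟩
  | succ t ih =>
    intro hs1 p q hp hq
    have ih' := ih (by omega)
    have hps : ArcN A (fun i => p (i + 1)) t := fun i hi => hp (i + 1) (by omega)
    obtain ⟨m₁, hm₁M, hm₁⟩ := ih' q _ (arcN_mono hq (by omega)) hps
    obtain ⟨m₀, hm₀M, hm₀⟩ := ih' p _ (arcN_mono hp (by omega)) hps
    set z0 : ℕ → V := fun i => if i ≤ t + 1 then p i else m₀ (p (t + 1)) with hz0
    set z1 : ℕ → V := fun i => if i ≤ t + 1 then p i else m₁ (q (t + 1)) with hz1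
    have hz0arc : ArcN A z0 (t + 2) := by
      intro i hi
      rcases Nat.lt_or_ge i (t + 1) with h | h
      · simp only [hz0, if_pos (by omega : i ≤ t + 1), if_pos (by omega : i + 1 ≤ t + 1)]
        exact hp i h
      · have hit : i = t + 1 := by omega
        subst hit
        simp only [hz0, if_pos (le_refl (t + 1)), if_neg (by omega : ¬ t + 1 + 1 ≤ t + 1)]
        have h2 := hAut m₀ (hMG.1 hm₀M) _ _ (hp t (by omega))
        rwa [hm₀ t le_rfl] at h2
    have hz1arc : ArcN A z1 (t + 2) := by
      intro i hi
      rcases Nat.lt_or_ge i (t + 1) with h | h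
      · simp only [hz1, if_pos (by omega : i ≤ t + 1), if_pos (by omega : i + 1 ≤ t + 1)]
        exact hp i h
      · have hit : i = t + 1 := by omega
        subst hit
        simp only [hz1, if_pos (le_refl (t + 1)), if_neg (by omega : ¬ t + 1 + 1 ≤ t + 1)]
        have h2 := hAut m₁ (hMG.1 hm₁M) _ _ (hq t (by omega))
        rwa [hm₁ t le_rfl] at h2
    obtain ⟨g, hgG, hg⟩ := G_arc_trans hat hout (by omega : t + 2 ≤ s) hz0arc hz1arc
    have hfix : ∀ i ≤ t + 1, g (p i) = p i := by
      intro i hi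
      have := hg i (by omega)
      simpa [hz0, hz1, if_pos hi] using this
    have hlast : g (m₀ (p (t + 1))) = m₁ (q (t + 1)) := by
      have := hg (t + 2) le_rfl
      simpa [hz0, hz1, if_neg (by omega : ¬ t + 2 ≤ t + 1)] using this
    refine ⟨m₁⁻¹ * (g * m₀ * g⁻¹), mul_mem (inv_mem hm₁M) (hMG.2 g hgG m₀ hm₀M), ?_⟩
    intro i hi
    have hginv : g⁻¹ (p i) = p i := by
      conv_lhs => rw [← hfix i hi]
      exact Equiv.symm_apply_apply g (p i)
    have expand : (m₁⁻¹ * (g * m₀ * g⁻¹)) (p i) = m₁⁻¹ (g (m₀ (g⁻¹ (p i)))) := rfl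
    rw [expand, hginv]
    rcases Nat.lt_or_ge i (t + 1) with h | h
    · rw [hm₀ i (by omega), hfix (i + 1) (by omega)]
      rw [← hm₁ i (by omega)]
      exact Equiv.symm_apply_apply m₁ (q i)
    · have hit : i = t + 1 := by omega
      subst hit
      rw [hlast]
      exact Equiv.symm_apply_apply m₁ (q (t + 1))

lemma lift_arc {A : V → V → Prop} {G M N : Subgroup (Equiv.Perm V)}
    (hAut : PreservesArcs A G) (hNM : NormalIn N M) (hMG : NormalIn M G)
    {U U' : Quotient (MulAction.orbitRel N V)} (h : quotArc A N U U')
    {u : V} (hu : orbMk N u = U) : ∃ u', A u u' ∧ orbMk N u' = U' := by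
  obtain ⟨w, w', hw, hw', haww⟩ := h
  obtain ⟨n, hn, hnw⟩ := (orbMk_eq_iff N).mp (hu.trans hw.symm)
  refine ⟨n w', ?_, ?_⟩
  · have h2 := hAut n (hMG.1 (hNM.1 hn)) w w' haww
    rwa [hnw] at h2
  · rw [orbMk_smul hn, hw']

lemma lift_chain {A : V → V → Prop} {G M N : Subgroup (Equiv.Perm V)}
    (hAut : PreservesArcs A G) (hNM : NormalIn N M) (hMG : NormalIn M G) :
    ∀ (t : ℕ) (P : ℕ → Quotient (MulAction.orbitRel N V)) (u₀ : V),
      (∀ i < t, quotArc A N (P i) (P (i + 1))) → orbMk N u₀ = P 0 →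
      ∃ p : ℕ → V, ArcN A p t ∧ ∀ i ≤ t, orbMk N (p i) = P i := by
  intro t
  induction t with
  | zero =>
    intro P u₀ _ hu₀
    exact ⟨fun _ => u₀, fun i hi => absurd hi (by omega),
      fun i hi => by rw [Nat.le_zero.mp hi]; exact hu₀⟩
  | succ t ih =>
    intro P u₀ hP hu₀
    obtain ⟨p, hparc, hporb⟩ := ih P u₀ (fun i hi => hP i (by omega)) hu₀
    obtain ⟨u', hu'arc, hu'orb⟩ :=
      lift_arc hAut hNM hMG (hP t (by omega)) (hporb t le_rfl)
    refine ⟨fun i => if i ≤ t then p i else u', ?_, ?_⟩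
    · intro i hi
      rcases Nat.lt_or_ge i t with h | h
      · simp only [if_pos (by omega : i ≤ t), if_pos (by omega : i + 1 ≤ t)]
        exact hparc i h
      · have hit : i = t := by omega
        subst hit
        simp only [if_pos (le_refl i), if_neg (by omega : ¬ i + 1 ≤ i)]
        exact hu'arc
    · intro i hi
      rcases Nat.lt_or_ge i (t + 1) with h | h
      · simp only [if_pos (by omega : i ≤ t)]
        exact hporb i (by omega)
      · have hit : i = t + 1 := by omega
        subst hit
        simp only [if_neg (by omega : ¬ t + 1 ≤ t)]
        exact hu'orb

lemma exists_third {α : Type*} [Finite α] (h3 : 3 ≤ Nat.card α) (X Y : α) :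
    ∃ Z, Z ≠ X ∧ Z ≠ Y := by
  by_contra h
  push_neg at h
  have hsurj : Function.Surjective (fun i : Fin 2 => if i.val = 0 then X else Y) := by
    intro Z
    by_cases hZ : Z = X
    · exact ⟨0, by simp [hZ]⟩
    · exact ⟨1, by simp [h Z hZ]⟩
  have := Nat.card_le_card_of_surjective _ hsurj
  simp [Nat.card_eq_fintype_card] at this
  omega

lemma reach_invariant {α : Type*} {r : α → α → Prop} {S : α → Prop}
    (hS : ∀ {X Y}, r X Y → S X → S Y) {a b : α}
    (h : Relation.ReflTransGen r a b) (ha : S a) : S b := by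
  induction h with
  | refl => exact ha
  | tail _ h2 ih => exact hS h2 ih

theorem subnormal_quotient_arc_transitive
    [Finite V] (A : V → V → Prop) (G M N : Subgroup (Equiv.Perm V)) (s : ℕ)
    (hdig : IsDigraph A) (hconn : Connected A) (hAut : PreservesArcs A G)
    (hvt : VertexTransitive G) (hs : 3 ≤ s) (hat : ArcTransitive A G s)
    (hNM : NormalIn N M) (hMG : NormalIn M G)
    (hNnotG : ¬ NormalIn N G) (hMtrans : ∀ u v : V, ∃ m ∈ M, m u = v)
    (horb : 3 ≤ Nat.card (Quotient (MulAction.orbitRel N V))) :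
    -- Γ_N is a digraph and is connected
    IsDigraph (quotArc A N) ∧ Connected (quotArc A N) ∧
    -- N lies in the kernel of the induced action of N_G(N) on V_N
    (∀ x ∈ N, ∀ v : V, orbMk N (x v) = orbMk N v) ∧
    -- the induced action of N_G(N)/N on Γ_N is vertex-transitive
    (∀ U U' : Quotient (MulAction.orbitRel N V),
      ∃ g ∈ G ⊓ Subgroup.normalizer (N : Set (Equiv.Perm V)), ∀ u : V, orbMk N u = U → orbMk N (g u) = U') ∧
    -- the induced action of N_G(N)/N on Γ_N is transitive on (s-1)-arcs
    (∀ p q : Fin ((s - 1) + 1) → Quotient (MulAction.orbitRel N V),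
      IsArcSeq (quotArc A N) (s - 1) p → IsArcSeq (quotArc A N) (s - 1) q →
      ∃ g ∈ G ⊓ Subgroup.normalizer (N : Set (Equiv.Perm V)), ∀ (i : Fin ((s - 1) + 1)) (u : V),
        orbMk N u = p i → orbMk N (g u) = q i) := by
  -- basic setup
  have hNontriv : Nontrivial (Quotient (MulAction.orbitRel N V)) :=
    Finite.one_lt_card_iff_nontrivial.mp (by omega)
  obtain ⟨U₁, U₂, hU12⟩ := hNontriv
  obtain ⟨u₁, hu₁⟩ := Quotient.exists_rep U₁
  obtain ⟨u₂, hu₂⟩ := Quotient.exists_rep U₂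
  have hu12 : u₁ ≠ u₂ := by
    intro h
    exact hU12 (by rw [← hu₁, ← hu₂, h])
  have harc : ∃ a b : V, A a b := exists_arc hconn hu12
  have hout : ∀ v : V, ∃ x, A v x := out_ext hAut hvt harc
  have Mtr := M_arc_trans hAut hat hMG hMtrans hout
  -- connectivity of the quotient
  have qconn : Connected (quotArc A N) := by
    intro U U'
    obtain ⟨u, hu0⟩ := Quotient.exists_rep U
    obtain ⟨u', hu'0⟩ := Quotient.exists_rep U'
    have hu : orbMk N u = U := hu0
    have hu' : orbMk N u' = U' := hu'0
    rw [← hu, ← hu']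
    exact Relation.ReflTransGen.lift (orbMk N)
      (fun a b hab => hab.imp (fun h => ⟨a, b, rfl, rfl, h⟩) (fun h => ⟨b, a, rfl, rfl, h⟩))
      _ _ (hconn u u')
  -- the quotient is a digraph
  have hdigQ : IsDigraph (quotArc A N) := by
    intro U U' h1 h2
    obtain ⟨u, hu0⟩ := Quotient.exists_rep U
    have hu : orbMk N u = U := hu0
    obtain ⟨b, hab, hb⟩ := lift_arc hAut hNM hMG h1 hu
    obtain ⟨c, hbc, hc⟩ := lift_arc hAut hNM hMG h2 hb
    -- any quotient 2-arc returns to its start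
    have h2arc : ∀ X Y Z, quotArc A N X Y → quotArc A N Y Z → X = Z := by
      intro X Y Z hXY hYZ
      obtain ⟨x, hx0⟩ := Quotient.exists_rep X
      have hx : orbMk N x = X := hx0
      obtain ⟨y, hxy, hy⟩ := lift_arc hAut hNM hMG hXY hx
      obtain ⟨z, hyz, hz⟩ := lift_arc hAut hNM hMG hYZ hy
      have hpf : ArcN A (fun i => if i = 0 then u else if i = 1 then b else c) 2 := by
        intro i hi
        match i, hi with
        | 0, _ => simpa using hab
        | 1, _ => simpa using hbc
      have hqf : ArcN A (fun i => if i = 0 then x else if i = 1 then y else z) 2 := by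
        intro i hi
        match i, hi with
        | 0, _ => simpa using hxy
        | 1, _ => simpa using hyz
      obtain ⟨m, hmM, hm⟩ := Mtr 2 (by omega) _ _ hpf hqf
      have e0 : m u = x := by simpa using hm 0 (by omega)
      have e2 : m c = z := by simpa using hm 2 le_rfl
      have hcu : orbMk N u = orbMk N c := hu.trans hc.symm
      have hmap := normalizer_map (mem_norm_of_M hNM hmM) hcu
      rw [e0, e2] at hmap
      rw [← hx, ← hz]
      exact hmap
    obtain ⟨Z, hZU, hZU'⟩ := exists_third horb U U'
    have hstep : ∀ X Y : Quotient (MulAction.orbitRel N V),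
        (quotArc A N X Y ∨ quotArc A N Y X) → (X = U ∨ X = U') → (Y = U ∨ Y = U') := by
      intro X Y hq hX
      rcases hX with hX | hX <;> rcases hq with hq | hq <;> rw [hX] at hq
      · exact Or.inr (h2arc U' U Y h2 hq).symm
      · exact Or.inr (h2arc Y U U' hq h1)
      · exact Or.inl (h2arc U U' Y h1 hq).symm
      · exact Or.inl (h2arc Y U' U hq h2)
    have hreach : Z = U ∨ Z = U' :=
      reach_invariant (S := fun X => X = U ∨ X = U')
        (fun {X Y} hq hX => hstep X Y hq hX) (qconn U Z) (Or.inl rfl)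
    rcases hreach with h | h
    · exact hZU h
    · exact hZU' h
  refine ⟨hdigQ, qconn, ?_, ?_, ?_⟩
  · -- N in the kernel
    exact fun x hx v => orbMk_smul hx v
  · -- vertex-transitivity
    intro U U'
    obtain ⟨u, hu0⟩ := Quotient.exists_rep U
    obtain ⟨u', hu'0⟩ := Quotient.exists_rep U'
    have hu : orbMk N u = U := hu0
    have hu' : orbMk N u' = U' := hu'0
    obtain ⟨m, hmM, hmu⟩ := hMtrans u u'
    refine ⟨m, Subgroup.mem_inf.mpr ⟨hMG.1 hmM, mem_norm_of_M hNM hmM⟩, ?_⟩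
    intro w hw
    have h1 : orbMk N w = orbMk N u := hw.trans hu.symm
    have h2 := normalizer_map (mem_norm_of_M hNM hmM) h1
    rw [hmu] at h2
    rw [h2, hu']
  · -- (s-1)-arc-transitivity
    intro p q hp hq
    set P : ℕ → Quotient (MulAction.orbitRel N V) :=
      fun i => if h : i < s - 1 + 1 then p ⟨i, h⟩ else p ⟨0, by omega⟩ with hPdef
    set Q : ℕ → Quotient (MulAction.orbitRel N V) :=
      fun i => if h : i < s - 1 + 1 then q ⟨i, h⟩ else q ⟨0, by omega⟩ with hQdef
    have hPi : ∀ i : Fin (s - 1 + 1), P i.val = p i := by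
      intro i
      rw [hPdef]
      simp only [dif_pos i.isLt, Fin.eta]
    have hQi : ∀ i : Fin (s - 1 + 1), Q i.val = q i := by
      intro i
      rw [hQdef]
      simp only [dif_pos i.isLt, Fin.eta]
    have hPchain : ∀ i < s - 1, quotArc A N (P i) (P (i + 1)) := by
      intro i hi
      have h2 := hp ⟨i, hi⟩
      have e1 : (⟨i, hi⟩ : Fin (s - 1)).castSucc = (⟨i, by omega⟩ : Fin (s - 1 + 1)) := by
        ext; simp
      have e2 : (⟨i, hi⟩ : Fin (s - 1)).succ = (⟨i + 1, by omega⟩ : Fin (s - 1 + 1)) := by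
        ext; simp
      rw [e1, e2] at h2
      rw [hPdef]
      simp only [dif_pos (by omega : i < s - 1 + 1), dif_pos (by omega : i + 1 < s - 1 + 1)]
      exact h2
    have hQchain : ∀ i < s - 1, quotArc A N (Q i) (Q (i + 1)) := by
      intro i hi
      have h2 := hq ⟨i, hi⟩
      have e1 : (⟨i, hi⟩ : Fin (s - 1)).castSucc = (⟨i, by omega⟩ : Fin (s - 1 + 1)) := by
        ext; simp
      have e2 : (⟨i, hi⟩ : Fin (s - 1)).succ = (⟨i + 1, by omega⟩ : Fin (s - 1 + 1)) := by
        ext; simp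
      rw [e1, e2] at h2
      rw [hQdef]
      simp only [dif_pos (by omega : i < s - 1 + 1), dif_pos (by omega : i + 1 < s - 1 + 1)]
      exact h2
    obtain ⟨u₀, hu₀⟩ := Quotient.exists_rep (P 0)
    obtain ⟨v₀, hv₀⟩ := Quotient.exists_rep (Q 0)
    obtain ⟨x, hxarc, hxorb⟩ := lift_chain hAut hNM hMG (s - 1) P u₀ hPchain hu₀
    obtain ⟨y, hyarc, hyorb⟩ := lift_chain hAut hNM hMG (s - 1) Q v₀ hQchain hv₀
    obtain ⟨m, hmM, hm⟩ := Mtr (s - 1) (by omega) x y hxarc hyarc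
    refine ⟨m, Subgroup.mem_inf.mpr ⟨hMG.1 hmM, mem_norm_of_M hNM hmM⟩, ?_⟩
    intro i w hw
    have hiv : i.val ≤ s - 1 := by omega
    have h1 : orbMk N w = orbMk N (x i.val) := by
      rw [hw, ← hPi i]
      exact (hxorb i.val hiv).symm
    have h2 := normalizer_map (mem_norm_of_M hNM hmM) h1
    rw [hm i.val hiv] at h2
    rw [h2, hyorb i.val hiv, hQi i]

end ArcTransDigraph
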